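/- If there exist b > 0 and α_b > 0 such that limsup_{n→∞} (1/n) log P( |X̄_n − S| ≤ b ) ≤ −α_b, then limsup_{n→∞} (1/n) log P_e^{(n)} ≤ −min{ α_b, C_p b² }, where C_p = (1−2p)²/2. -/

import Mathlib

open MeasureTheory Filter Real

section Auxiliary

open Finset

lemma hoeff_aux (q t : ℝ) (hq0 : 0 ≤ q) (hq1 : q ≤ 1) :
    q * Real.exp (t * (1 - (2*q - 1))) + (1 - q) * Real.exp (t * (-1 - (2*q - 1)))
      ≤ Real.exp (t ^ 2 / 2) := by
  set μ : ℝ := 2*q - 1 with hμ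
  set u : ℝ → ℝ := fun s => q * Real.exp s + (1 - q) * Real.exp (-s) with hu
  have hupos : ∀ s, 0 < u s := by
    intro s
    rcases eq_or_lt_of_le hq0 with h | h
    · simp only [hu, ← h]
      have := Real.exp_pos (-s)
      nlinarith
    · have h1 : 0 < q * Real.exp s := mul_pos h (Real.exp_pos s)
      have h2 : 0 ≤ (1 - q) * Real.exp (-s) :=
        mul_nonneg (by linarith) (Real.exp_pos (-s)).le
      simp only [hu]; linarith
  set v : ℝ → ℝ := fun s => q * Real.exp s - (1 - q) * Real.exp (-s) with hv
  have hde : ∀ s : ℝ, HasDerivAt (fun r : ℝ => Real.exp (-r)) (-Real.exp (-s)) s := by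
    intro s
    exact ((Real.hasDerivAt_exp (-s)).comp s (hasDerivAt_neg s)).congr_deriv (by ring)
  have hduv : ∀ s, HasDerivAt u (v s) s := by
    intro s
    have := ((Real.hasDerivAt_exp s).const_mul q).add ((hde s).const_mul (1 - q))
    refine this.congr_deriv ?_
    simp only [hv]; ring
  have hdvu : ∀ s, HasDerivAt v (u s) s := by
    intro s
    have := ((Real.hasDerivAt_exp s).const_mul q).sub ((hde s).const_mul (1 - q))
    refine this.congr_deriv ?_
    simp only [hu]
    ring
  set φ : ℝ → ℝ := fun s => s + μ - v s / u s with hφ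
  have hdφ : ∀ s, HasDerivAt φ ((v s / u s) ^ 2) s := by
    intro s
    have hdiv : HasDerivAt (fun r => v r / u r)
        ((u s * u s - v s * v s) / (u s) ^ 2) s := (hdvu s).div (hduv s) (hupos s).ne'
    have := ((hasDerivAt_id s).add_const μ).sub hdiv
    refine this.congr_deriv ?_
    have h0 : u s ≠ 0 := (hupos s).ne'
    field_simp
    ring
  have hmonoφ : Monotone φ :=
    monotone_of_deriv_nonneg (fun s => (hdφ s).differentiableAt)
      (fun s => by rw [(hdφ s).deriv]; positivity)
  have hu0 : u 0 = 1 := by simp [hu]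
  have hv0 : v 0 = μ := by simp [hv, hμ]; ring
  have hφ0 : φ 0 = 0 := by simp [hφ, hu0, hv0]
  set h : ℝ → ℝ := fun s => s ^ 2 / 2 + μ * s - Real.log (u s) with hh
  have hdh : ∀ s, HasDerivAt h (φ s) s := by
    intro s
    have hlog : HasDerivAt (fun r => Real.log (u r)) (v s / u s) s :=
      (hduv s).log (hupos s).ne'
    have hsq : HasDerivAt (fun r : ℝ => r ^ 2 / 2 + μ * r) (s + μ) s := by
      have := ((hasDerivAt_pow 2 s).div_const 2).add ((hasDerivAt_id s).const_mul μ)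
      refine this.congr_deriv ?_
      ring
    exact hsq.sub hlog
  have hh0 : h 0 = 0 := by
    simp [hh, hu]
  have hnonneg : ∀ s, 0 ≤ h s := by
    intro s
    have hdiff : ∀ x : ℝ, DifferentiableAt ℝ h x := fun x => (hdh x).differentiableAt
    rcases le_total 0 s with hs | hs
    · have hm : MonotoneOn h (Set.Ici (0:ℝ)) := by
        apply monotoneOn_of_deriv_nonneg (convex_Ici 0)
          (fun x _ => (hdh x).continuousAt.continuousWithinAt)
          (fun x _ => (hdiff x).differentiableWithinAt)
        intro x hx
        rw [(hdh x).deriv]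
        have : φ 0 ≤ φ x := hmonoφ (le_of_lt (by simpa using hx))
        linarith [hφ0 ▸ this]
      have := hm (Set.mem_Ici.2 le_rfl) (Set.mem_Ici.2 hs) hs
      linarith [hh0]
    · have hm : AntitoneOn h (Set.Iic (0:ℝ)) := by
        apply antitoneOn_of_deriv_nonpos (convex_Iic 0)
          (fun x _ => (hdh x).continuousAt.continuousWithinAt)
          (fun x _ => (hdiff x).differentiableWithinAt)
        intro x hx
        rw [(hdh x).deriv]
        have : φ x ≤ φ 0 := hmonoφ (le_of_lt (by simpa using hx))
        linarith [hφ0 ▸ this]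
      have := hm (Set.mem_Iic.2 hs) (Set.mem_Iic.2 le_rfl) hs
      linarith [hh0]
  have hlogle : Real.log (u t) ≤ t ^ 2 / 2 + μ * t := by
    have := hnonneg t
    simp only [hh] at this
    linarith
  have hule : u t ≤ Real.exp (t ^ 2 / 2 + μ * t) := by
    calc u t = Real.exp (Real.log (u t)) := (Real.exp_log (hupos t)).symm
    _ ≤ _ := Real.exp_le_exp.2 hlogle
  have key : Real.exp (-(μ * t)) * u t ≤ Real.exp (t ^ 2 / 2) := by
    calc Real.exp (-(μ * t)) * u t ≤ Real.exp (-(μ * t)) * Real.exp (t ^ 2 / 2 + μ * t) :=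
          mul_le_mul_of_nonneg_left hule (Real.exp_pos _).le
    _ = Real.exp (t ^ 2 / 2) := by rw [← Real.exp_add]; ring_nf
  calc q * Real.exp (t * (1 - μ)) + (1 - q) * Real.exp (t * (-1 - μ))
      = Real.exp (-(μ * t)) * u t := by
        rw [show t * (1 - μ) = -(μ*t) + t by ring, show t * (-1 - μ) = -(μ*t) + -t by ring,
          Real.exp_add, Real.exp_add]
        simp only [hu]
        ring
  _ ≤ Real.exp (t ^ 2 / 2) := key

lemma chernoff (n : ℕ) (p t : ℝ) (hp0 : 0 < p) (hp1 : p < 1/2) (x : Fin n → ℝ)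
    (hx : ∀ i, x i = 1 ∨ x i = -1) :
    ∑ y ∈ (Fintype.piFinset fun _ : Fin n => ({1, -1} : Finset ℝ)).filter
        (fun y => (n:ℝ) * t ^ 2 ≤ t * ∑ i, (y i - (1 - 2*p) * x i)),
      ∏ i, (if y i = x i then 1 - p else p)
      ≤ Real.exp (-((n:ℝ) * t ^ 2 / 2)) := by
  set S := Fintype.piFinset fun _ : Fin n => ({1, -1} : Finset ℝ) with hS
  have hWnn : ∀ y : Fin n → ℝ, 0 ≤ ∏ i, (if y i = x i then 1 - p else p) := by
    intro y
    apply Finset.prod_nonneg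
    intro i _
    split <;> linarith
  have step1 : ∑ y ∈ S.filter (fun y => (n:ℝ) * t ^ 2 ≤ t * ∑ i, (y i - (1 - 2*p) * x i)),
      ∏ i, (if y i = x i then 1 - p else p)
      ≤ ∑ y ∈ S, (∏ i, (if y i = x i then 1 - p else p)) *
          Real.exp (t * (∑ i, (y i - (1 - 2*p) * x i)) - (n:ℝ) * t ^ 2) := by
    refine le_trans (Finset.sum_le_sum ?_) (Finset.sum_le_sum_of_subset_of_nonneg
      (Finset.filter_subset _ _) (fun y _ _ => mul_nonneg (hWnn y) (Real.exp_pos _).le))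
    intro y hy
    rw [Finset.mem_filter] at hy
    have : (1:ℝ) ≤ Real.exp (t * (∑ i, (y i - (1 - 2*p) * x i)) - (n:ℝ) * t ^ 2) :=
      Real.one_le_exp (by linarith [hy.2])
    nlinarith [hWnn y]
  have step2 : ∀ y : Fin n → ℝ,
      (∏ i, (if y i = x i then 1 - p else p)) *
          Real.exp (t * (∑ i, (y i - (1 - 2*p) * x i)) - (n:ℝ) * t ^ 2)
      = Real.exp (-((n:ℝ) * t ^ 2)) *
          ∏ i, ((if y i = x i then 1 - p else p) * Real.exp (t * (y i - (1 - 2*p) * x i))) := by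
    intro y
    rw [show t * (∑ i, (y i - (1 - 2*p) * x i)) - (n:ℝ) * t ^ 2
        = (-((n:ℝ) * t ^ 2)) + ∑ i, t * (y i - (1 - 2*p) * x i) by rw [Finset.mul_sum]; ring,
      Real.exp_add, Real.exp_sum, Finset.prod_mul_distrib]
    ring
  have step3 : ∑ y ∈ S,
      ∏ i, ((if y i = x i then 1 - p else p) * Real.exp (t * (y i - (1 - 2*p) * x i)))
      = ∏ i : Fin n, ∑ z ∈ ({1, -1} : Finset ℝ),
          ((if z = x i then 1 - p else p) * Real.exp (t * (z - (1 - 2*p) * x i))) := by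
    rw [hS]
    exact (Finset.prod_univ_sum (fun _ : Fin n => ({1, -1} : Finset ℝ))
      (fun i z => (if z = x i then 1 - p else p) * Real.exp (t * (z - (1 - 2*p) * x i)))).symm
  have step4 : ∀ i : Fin n, ∑ z ∈ ({1, -1} : Finset ℝ),
      ((if z = x i then 1 - p else p) * Real.exp (t * (z - (1 - 2*p) * x i)))
      ≤ Real.exp (t ^ 2 / 2) := by
    intro i
    rw [Finset.sum_pair (by norm_num : (1:ℝ) ≠ -1)]
    rcases hx i with hxi | hxi
    · have h := hoeff_aux (1 - p) t (by linarith) (by linarith)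
      rw [show (2*(1-p)-1 : ℝ) = 1-2*p from by ring,
        show (1-(1-p) : ℝ) = p from by ring] at h
      rw [hxi]
      norm_num
      convert h using 3 <;> ring
    · have h := hoeff_aux p t (by linarith) (by linarith)
      rw [hxi]
      norm_num
      convert h using 3 <;> ring
  calc ∑ y ∈ S.filter (fun y => (n:ℝ) * t ^ 2 ≤ t * ∑ i, (y i - (1 - 2*p) * x i)),
      ∏ i, (if y i = x i then 1 - p else p)
      ≤ ∑ y ∈ S, (∏ i, (if y i = x i then 1 - p else p)) *
          Real.exp (t * (∑ i, (y i - (1 - 2*p) * x i)) - (n:ℝ) * t ^ 2) := step1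
    _ = Real.exp (-((n:ℝ) * t ^ 2)) * ∏ i : Fin n, ∑ z ∈ ({1, -1} : Finset ℝ),
          ((if z = x i then 1 - p else p) * Real.exp (t * (z - (1 - 2*p) * x i))) := by
        rw [Finset.sum_congr rfl (fun y _ => step2 y), ← Finset.mul_sum, step3]
    _ ≤ Real.exp (-((n:ℝ) * t ^ 2)) * Real.exp ((n:ℝ) * (t ^ 2 / 2)) := by
        gcongr
        calc ∏ i : Fin n, ∑ z ∈ ({1, -1} : Finset ℝ),
            ((if z = x i then 1 - p else p) * Real.exp (t * (z - (1 - 2*p) * x i)))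
            ≤ ∏ _i : Fin n, Real.exp (t ^ 2 / 2) := by
              apply Finset.prod_le_prod
              · intro i _
                apply Finset.sum_nonneg
                intro z _
                have : (0:ℝ) ≤ (if z = x i then 1 - p else p) := by split <;> linarith
                positivity
              · intro i _
                exact step4 i
          _ = Real.exp ((n:ℝ) * (t ^ 2 / 2)) := by
              rw [Finset.prod_const, Finset.card_univ, Fintype.card_fin, ← Real.exp_nat_mul]
    _ = Real.exp (-((n:ℝ) * t ^ 2 / 2)) := by
        rw [← Real.exp_add]; congr 1; ring

lemma chernoff_abs (n : ℕ) (p ε : ℝ) (hp0 : 0 < p) (hp1 : p < 1/2) (hε : 0 ≤ ε)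
    (x : Fin n → ℝ) (hx : ∀ i, x i = 1 ∨ x i = -1) :
    ∑ y ∈ (Fintype.piFinset fun _ : Fin n => ({1, -1} : Finset ℝ)).filter
        (fun y => (n:ℝ) * ε ≤ |∑ i, (y i - (1 - 2*p) * x i)|),
      ∏ i, (if y i = x i then 1 - p else p)
      ≤ 2 * Real.exp (-((n:ℝ) * ε ^ 2 / 2)) := by
  classical
  set S := Fintype.piFinset fun _ : Fin n => ({1, -1} : Finset ℝ) with hS
  set W : (Fin n → ℝ) → ℝ := fun y => ∏ i, (if y i = x i then 1 - p else p) with hWdef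
  have hWnn : ∀ y, 0 ≤ W y := by
    intro y; apply Finset.prod_nonneg; intro i _; split <;> linarith
  set D : (Fin n → ℝ) → ℝ := fun y => ∑ i, (y i - (1 - 2*p) * x i) with hDdef
  have h1 := chernoff n p ε hp0 hp1 x hx
  have h2 := chernoff n p (-ε) hp0 hp1 x hx
  rw [show ((-ε)^2 : ℝ) = ε^2 from by ring] at h2
  set Pa : (Fin n → ℝ) → Prop := fun y => (n:ℝ) * ε ≤ |D y| with hPa
  set Q : (Fin n → ℝ) → Prop := fun y => (n:ℝ) * ε ^ 2 ≤ ε * D y with hQ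
  have hsplit := Finset.sum_filter_add_sum_filter_not (S.filter Pa) Q W
  have hsub1 : (S.filter Pa).filter Q ⊆ S.filter (fun y => (n:ℝ) * ε ^ 2 ≤ ε * D y) := by
    intro y hy
    simp only [Finset.mem_filter] at hy ⊢
    exact ⟨hy.1.1, hy.2⟩
  have hsub2 : (S.filter Pa).filter (fun y => ¬ Q y)
      ⊆ S.filter (fun y => (n:ℝ) * ε ^ 2 ≤ (-ε) * D y) := by
    intro y hy
    simp only [Finset.mem_filter, hQ, hPa] at hy ⊢
    refine ⟨hy.1.1, ?_⟩
    have habs : (n:ℝ) * ε ^ 2 ≤ ε * |D y| := by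
      have := mul_le_mul_of_nonneg_left hy.1.2 hε
      nlinarith
    rcases abs_cases (D y) with ⟨he, _⟩ | ⟨he, _⟩
    · exact absurd (by rw [he] at habs; exact habs) hy.2
    · rw [he] at habs; linarith
  have hb1 : ∑ y ∈ (S.filter Pa).filter Q, W y ≤ Real.exp (-((n:ℝ) * ε ^ 2 / 2)) :=
    le_trans (Finset.sum_le_sum_of_subset_of_nonneg hsub1 (fun y _ _ => hWnn y)) h1
  have hb2 : ∑ y ∈ (S.filter Pa).filter (fun y => ¬ Q y), W y
      ≤ Real.exp (-((n:ℝ) * ε ^ 2 / 2)) :=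
    le_trans (Finset.sum_le_sum_of_subset_of_nonneg hsub2 (fun y _ _ => hWnn y)) h2
  calc ∑ y ∈ S.filter Pa, W y
      = ∑ y ∈ (S.filter Pa).filter Q, W y
        + ∑ y ∈ (S.filter Pa).filter (fun y => ¬ Q y), W y := hsplit.symm
    _ ≤ 2 * Real.exp (-((n:ℝ) * ε ^ 2 / 2)) := by linarith

lemma decomp_gen {Ω : Type*} [MeasurableSpace Ω] (P : Measure Ω) {α : Type*} [MeasurableSpace α]
    [MeasurableSingletonClass α] (f : Ω → α) (hf : Measurable f) (s : Finset α)
    (hs : ∀ ω, f ω ∈ s) (C : α → Prop) [DecidablePred C] :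
    P {ω | C (f ω)} = ∑ a ∈ s.filter C, P {ω | f ω = a} := by
  have hset : {ω | C (f ω)} = ⋃ a ∈ s.filter C, {ω | f ω = a} := by
    ext ω
    simp only [Set.mem_setOf_eq, Set.mem_iUnion, Finset.mem_filter]
    constructor
    · intro h
      exact ⟨f ω, ⟨⟨hs ω, h⟩, rfl⟩⟩
    · rintro ⟨a, ⟨-, hC⟩, ha⟩
      rw [ha]; exact hC
  rw [hset, measure_biUnion_finset]
  · intro a _ c _ hac
    apply Set.disjoint_left.2
    intro ω h1 h2
    have e1 : f ω = a := h1
    have e2 : f ω = c := h2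
    exact hac (e1.symm.trans e2)
  · intro a _
    exact hf (measurableSet_singleton a)

lemma keyB {Ω : Type*} [MeasurableSpace Ω] (P : Measure Ω) [IsProbabilityMeasure P]
    (p : ℝ) (hp0 : 0 < p) (hp1 : p < 1/2) (n : ℕ)
    (Xn Yn : Ω → Fin n → ℝ)
    (hXval : ∀ ω i, Xn ω i = 1 ∨ Xn ω i = -1)
    (hYval : ∀ ω i, Yn ω i = 1 ∨ Yn ω i = -1)
    (hXmeas : Measurable Xn) (hYmeas : Measurable Yn)
    (hjoint : ∀ (x y : Fin n → ℝ), (∀ i, x i = 1 ∨ x i = -1) → (∀ i, y i = 1 ∨ y i = -1) →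
      (P {ω | Xn ω = x ∧ Yn ω = y}).toReal
        = (P {ω | Xn ω = x}).toReal * ∏ i, (if y i = x i then 1 - p else p))
    (ε : ℝ) (hε : 0 ≤ ε) :
    P {ω | (n:ℝ) * ε ≤ |∑ i, (Yn ω i - (1 - 2*p) * Xn ω i)|}
      ≤ ENNReal.ofReal (2 * Real.exp (-((n:ℝ) * ε ^ 2 / 2))) := by
  classical
  set S := Fintype.piFinset fun _ : Fin n => ({1, -1} : Finset ℝ) with hS
  have hmemS : ∀ (g : Ω → Fin n → ℝ), (∀ ω i, g ω i = 1 ∨ g ω i = -1) → ∀ ω, g ω ∈ S := by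
    intro g hg ω
    rw [hS, Fintype.mem_piFinset]
    intro i
    rcases hg ω i with h | h <;> simp [h]
  have hvalS : ∀ x : Fin n → ℝ, x ∈ S → ∀ i, x i = 1 ∨ x i = -1 := by
    intro x hxS i
    rw [hS, Fintype.mem_piFinset] at hxS
    simpa using hxS i
  set C : (Fin n → ℝ) × (Fin n → ℝ) → Prop :=
    fun q => (n:ℝ) * ε ≤ |∑ i, (q.2 i - (1 - 2*p) * q.1 i)| with hC
  have hdec := decomp_gen P (fun ω => (Xn ω, Yn ω)) (hXmeas.prodMk hYmeas) (S ×ˢ S)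
    (fun ω => Finset.mem_product.2 ⟨hmemS Xn hXval ω, hmemS Yn hYval ω⟩) C
  have hpair : ∀ q : (Fin n → ℝ) × (Fin n → ℝ),
      {ω | (Xn ω, Yn ω) = q} = {ω | Xn ω = q.1 ∧ Yn ω = q.2} := by
    intro q; ext ω; simp [Prod.ext_iff]
  have htoReal : (P {ω | C (Xn ω, Yn ω)}).toReal
      = ∑ q ∈ (S ×ˢ S).filter C, (P {ω | (fun ω => (Xn ω, Yn ω)) ω = q}).toReal := by
    rw [hdec, ENNReal.toReal_sum (fun q _ => measure_ne_top P _)]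
  have hexp : (0:ℝ) ≤ 2 * Real.exp (-((n:ℝ) * ε ^ 2 / 2)) := by positivity
  have hmarg : ∑ x ∈ S, (P {ω | Xn ω = x}).toReal = 1 := by
    have h := decomp_gen P Xn hXmeas S (hmemS Xn hXval) (fun _ => True)
    simp only [Set.setOf_true, measure_univ, Finset.filter_true] at h
    rw [← ENNReal.toReal_sum (fun q _ => measure_ne_top P _), ← h, ENNReal.toReal_one]
  have hsum : ∑ q ∈ (S ×ˢ S).filter C, (P {ω | (fun ω => (Xn ω, Yn ω)) ω = q}).toReal
      ≤ 2 * Real.exp (-((n:ℝ) * ε ^ 2 / 2)) := by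
    rw [Finset.sum_filter, Finset.sum_product]
    have hinner : ∀ x ∈ S,
        (∑ y ∈ S, if C (x, y) then (P {ω | (fun ω => (Xn ω, Yn ω)) ω = (x, y)}).toReal else 0)
        ≤ (P {ω | Xn ω = x}).toReal * (2 * Real.exp (-((n:ℝ) * ε ^ 2 / 2))) := by
      intro x hxS
      have hterm : ∀ y ∈ S,
          (if C (x, y) then (P {ω | (fun ω => (Xn ω, Yn ω)) ω = (x, y)}).toReal else 0)
          = (P {ω | Xn ω = x}).toReal *
              (if C (x, y) then ∏ i, (if y i = x i then 1 - p else p) else 0) := by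
        intro y hyS
        have : (P {ω | (fun ω => (Xn ω, Yn ω)) ω = (x, y)}).toReal
            = (P {ω | Xn ω = x}).toReal * ∏ i, (if y i = x i then 1 - p else p) := by
          rw [show {ω | (fun ω => (Xn ω, Yn ω)) ω = (x, y)} = {ω | Xn ω = x ∧ Yn ω = y} from
            hpair (x, y)]
          exact hjoint x y (hvalS x hxS) (hvalS y hyS)
        rw [this, mul_ite, mul_zero]
      rw [Finset.sum_congr rfl hterm, ← Finset.mul_sum]
      apply mul_le_mul_of_nonneg_left _ ENNReal.toReal_nonneg
      rw [← Finset.sum_filter]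
      exact chernoff_abs n p ε hp0 hp1 hε x (hvalS x hxS)
    calc (∑ x ∈ S, ∑ y ∈ S,
          if C (x, y) then (P {ω | (fun ω => (Xn ω, Yn ω)) ω = (x, y)}).toReal else 0)
        ≤ ∑ x ∈ S, (P {ω | Xn ω = x}).toReal * (2 * Real.exp (-((n:ℝ) * ε ^ 2 / 2))) :=
          Finset.sum_le_sum hinner
      _ = (∑ x ∈ S, (P {ω | Xn ω = x}).toReal) * (2 * Real.exp (-((n:ℝ) * ε ^ 2 / 2))) := by
          rw [Finset.sum_mul]
      _ = 2 * Real.exp (-((n:ℝ) * ε ^ 2 / 2)) := by rw [hmarg, one_mul]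
  have hgoal : P {ω | (n:ℝ) * ε ≤ |∑ i, (Yn ω i - (1 - 2*p) * Xn ω i)|}
      = P {ω | C (Xn ω, Yn ω)} := rfl
  rw [hgoal, ← ENNReal.ofReal_toReal (measure_ne_top P _)]
  exact ENNReal.ofReal_le_ofReal (htoReal ▸ hsum)

end Auxiliary

set_option maxHeartbeats 1000000

/-- In the sentiment detection model, if there exist `b > 0` and `α_b > 0`
such that `limsup_{n→∞} (1/n) log P(|X̄_n - S| ≤ b) ≤ -α_b`, then
`limsup_{n→∞} (1/n) log P_e^{(n)} ≤ -min{α_b, C_p b²}` with `C_p = (1-2p)²/2`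
(logarithms of probabilities are taken in the extended reals, so `log 0 = -∞`). -/
theorem supermajority_error_exponential_decay
    {Ω : Type*} [MeasurableSpace Ω] (P : Measure Ω) [IsProbabilityMeasure P]
    (p S : ℝ) (hp0 : 0 < p) (hp1 : p < 1 / 2) (hS0 : -1 < S) (hS1 : S < 1)
    (X Y : (n : ℕ) → Ω → Fin n → ℝ)
    (hXval : ∀ n ω i, X n ω i = 1 ∨ X n ω i = -1)
    (hYval : ∀ n ω i, Y n ω i = 1 ∨ Y n ω i = -1)
    (hXmeas : ∀ n, Measurable (X n))
    (hYmeas : ∀ n, Measurable (Y n))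
    (hjoint : ∀ n (x y : Fin n → ℝ), (∀ i, x i = 1 ∨ x i = -1) →
      (∀ i, y i = 1 ∨ y i = -1) →
      (P {ω | X n ω = x ∧ Y n ω = y}).toReal
        = (P {ω | X n ω = x}).toReal * ∏ i, (if y i = x i then 1 - p else p))
    (b αb : ℝ) (hb : 0 < b) (hαb : 0 < αb)
    (hdev : limsup (fun n : ℕ =>
        (((n : ℝ)⁻¹ : ℝ) : EReal) * ENNReal.log (P {ω | |(∑ i, X n ω i) / n - S| ≤ b}))
        atTop ≤ ((-αb : ℝ) : EReal)) :
    limsup (fun n : ℕ =>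
        (((n : ℝ)⁻¹ : ℝ) : EReal) * ENNReal.log
          (P {ω | ((∑ i, X n ω i) / n - S) * ((∑ i, Y n ω i) / n - (1 - 2 * p) * S) < 0}))
      atTop ≤ ((-(min αb ((1 - 2 * p) ^ 2 / 2 * b ^ 2)) : ℝ) : EReal) := by
  classical
  have hμpos : 0 < 1 - 2 * p := by linarith
  set m : ℝ := min αb ((1 - 2 * p) ^ 2 / 2 * b ^ 2) with hm
  have hmpos : 0 < m := lt_min hαb (by positivity)
  set g := fun n : ℕ =>
      (((n : ℝ)⁻¹ : ℝ) : EReal) * ENNReal.log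
        (P {ω | ((∑ i, X n ω i) / n - S) * ((∑ i, Y n ω i) / n - (1 - 2 * p) * S) < 0})
    with hg
  suffices h : ∀ r : ℝ, 0 < r → r < m → limsup g atTop ≤ ((-r : ℝ) : EReal) by
    by_contra hcon
    push_neg at hcon
    have h0 : ((-m : ℝ) : EReal) < min (limsup g atTop) 0 := by
      refine lt_min hcon ?_
      exact_mod_cast (by linarith : -m < (0:ℝ))
    obtain ⟨c, hc1, hc2⟩ := EReal.exists_between_coe_real h0
    rw [lt_min_iff] at hc2
    have hcneg : c < 0 := by exact_mod_cast hc2.2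
    have hcm : -m < c := by exact_mod_cast hc1
    have := h (-c) (by linarith) (by linarith)
    rw [neg_neg] at this
    exact absurd this (not_le.2 hc2.1)
  intro r hr0 hrm
  have hrαb : r < αb := lt_of_lt_of_le hrm (min_le_left _ _)
  have hrC : r < (1 - 2 * p) ^ 2 / 2 * b ^ 2 := lt_of_lt_of_le hrm (min_le_right _ _)
  -- eventual bound on P(A n)
  have hev1 : ∀ᶠ n : ℕ in atTop,
      (((n : ℝ)⁻¹ : ℝ) : EReal) * ENNReal.log (P {ω | |(∑ i, X n ω i) / n - S| ≤ b})
        < ((-r : ℝ) : EReal) :=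
    eventually_lt_of_limsup_lt (lt_of_le_of_lt hdev (by exact_mod_cast neg_lt_neg hrαb))
  have hev2 : ∀ᶠ n : ℕ in atTop, 1 ≤ n := eventually_ge_atTop 1
  have key : ∀ᶠ n : ℕ in atTop, g n ≤ (((n:ℝ)⁻¹ * Real.log 3 - r : ℝ) : EReal) := by
    filter_upwards [hev1, hev2] with n hA hn
    have hnpos : (0:ℝ) < n := by exact_mod_cast hn
    -- Step a : P(A n) ≤ ofReal (exp (-(r*n)))
    have hstepA : P {ω | |(∑ i, X n ω i) / n - S| ≤ b} ≤ ENNReal.ofReal (Real.exp (-(r * n))) := by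
      by_cases hA0 : P {ω | |(∑ i, X n ω i) / n - S| ≤ b} = 0
      · rw [hA0]; exact zero_le
      · have hAt : P {ω | |(∑ i, X n ω i) / n - S| ≤ b} ≠ ⊤ := measure_ne_top P _
        set tA := (P {ω | |(∑ i, X n ω i) / n - S| ≤ b}).toReal with htA
        have htApos : 0 < tA := ENNReal.toReal_pos hA0 hAt
        rw [ENNReal.log_pos_real hA0 hAt] at hA
        rw [show (((n : ℝ)⁻¹ : ℝ) : EReal) * ((Real.log tA : ℝ) : EReal)
            = (((n:ℝ)⁻¹ * Real.log tA : ℝ) : EReal) from (EReal.coe_mul _ _).symm] at hA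
        have hA' : (n:ℝ)⁻¹ * Real.log tA < -r := EReal.coe_lt_coe_iff.1 hA
        have hL : Real.log tA < -(r * n) := by
          have h' := (mul_lt_mul_iff_right₀ hnpos).2 hA'
          rw [← mul_assoc, mul_inv_cancel₀ hnpos.ne', one_mul] at h'
          nlinarith
        have : tA ≤ Real.exp (-(r * n)) := by
          rw [← Real.exp_log htApos]
          exact (Real.exp_le_exp.2 hL.le)
        calc P {ω | |(∑ i, X n ω i) / n - S| ≤ b} = ENNReal.ofReal tA :=
              (ENNReal.ofReal_toReal hAt).symm
          _ ≤ _ := ENNReal.ofReal_le_ofReal this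
    -- Step b : inclusion
    have hincl : {ω | ((∑ i, X n ω i) / n - S) * ((∑ i, Y n ω i) / n - (1 - 2 * p) * S) < 0}
        ⊆ {ω | |(∑ i, X n ω i) / n - S| ≤ b}
          ∪ {ω | (n:ℝ) * ((1 - 2*p) * b) ≤ |∑ i, (Y n ω i - (1 - 2*p) * X n ω i)|} := by
      intro ω hω
      simp only [Set.mem_setOf_eq, Set.mem_union]
      by_cases hAω : |(∑ i, X n ω i) / n - S| ≤ b
      · exact Or.inl hAω
      · right
        push_neg at hAω
        have hE : ((∑ i, X n ω i) / n - S) * ((∑ i, Y n ω i) / n - (1 - 2 * p) * S) < 0 := hω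
        obtain ⟨zx, hzx⟩ : ∃ z : ℝ, (∑ i, X n ω i) / n - S = z := ⟨_, rfl⟩
        obtain ⟨zy, hzy⟩ : ∃ z : ℝ, (∑ i, Y n ω i) / n - (1 - 2 * p) * S = z := ⟨_, rfl⟩
        rw [hzx, hzy] at hE
        rw [hzx] at hAω
        have e1 : (∑ i, X n ω i) = (n:ℝ) * (zx + S) := by
          rw [← hzx]; field_simp; ring
        have e2 : (∑ i, Y n ω i) = (n:ℝ) * (zy + (1 - 2 * p) * S) := by
          rw [← hzy]; field_simp; ring
        have hsum : ∑ i, (Y n ω i - (1 - 2*p) * X n ω i) = (n:ℝ) * (zy - (1 - 2*p) * zx) := by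
          rw [Finset.sum_sub_distrib, ← Finset.mul_sum, e1, e2]; ring
        rw [hsum, abs_mul, abs_of_pos hnpos]
        apply mul_le_mul_of_nonneg_left _ hnpos.le
        rcases lt_abs.1 hAω with hc | hc
        · have hzy0 : zy < 0 := by nlinarith
          have h3 : zy - (1 - 2*p) * zx < -((1 - 2*p) * b) := by nlinarith
          calc (1 - 2*p) * b ≤ -(zy - (1 - 2*p) * zx) := by linarith
            _ ≤ |zy - (1 - 2*p) * zx| := neg_le_abs _
        · have hzxneg : zx < -b := by linarith
          have hzy0 : 0 < zy := by nlinarith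
          have h3 : (1 - 2*p) * b < zy - (1 - 2*p) * zx := by nlinarith
          calc (1 - 2*p) * b ≤ zy - (1 - 2*p) * zx := h3.le
            _ ≤ |zy - (1 - 2*p) * zx| := le_abs_self _
    -- Step c
    have hB := keyB P p hp0 hp1 n (X n) (Y n) (fun ω i => hXval n ω i) (fun ω i => hYval n ω i)
      (hXmeas n) (hYmeas n) (hjoint n) ((1 - 2*p) * b) (by positivity)
    have hBexp : (2 : ℝ) * Real.exp (-((n:ℝ) * ((1 - 2*p) * b) ^ 2 / 2))
        ≤ 2 * Real.exp (-(r * n)) := by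
      have : r * n ≤ (n:ℝ) * ((1 - 2*p) * b) ^ 2 / 2 := by nlinarith
      have := Real.exp_le_exp.2 (neg_le_neg this)
      linarith
    have hstepC : P {ω | ((∑ i, X n ω i) / n - S) * ((∑ i, Y n ω i) / n - (1 - 2 * p) * S) < 0}
        ≤ ENNReal.ofReal (3 * Real.exp (-(r * n))) := by
      calc P {ω | ((∑ i, X n ω i) / n - S) * ((∑ i, Y n ω i) / n - (1 - 2 * p) * S) < 0}
          ≤ P ({ω | |(∑ i, X n ω i) / n - S| ≤ b}
              ∪ {ω | (n:ℝ) * ((1 - 2*p) * b) ≤ |∑ i, (Y n ω i - (1 - 2*p) * X n ω i)|}) :=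
            measure_mono hincl
        _ ≤ P {ω | |(∑ i, X n ω i) / n - S| ≤ b}
            + P {ω | (n:ℝ) * ((1 - 2*p) * b) ≤ |∑ i, (Y n ω i - (1 - 2*p) * X n ω i)|} :=
            measure_union_le _ _
        _ ≤ ENNReal.ofReal (Real.exp (-(r * n)))
            + ENNReal.ofReal (2 * Real.exp (-((n:ℝ) * ((1 - 2*p) * b) ^ 2 / 2))) :=
            add_le_add hstepA hB
        _ ≤ ENNReal.ofReal (Real.exp (-(r * n))) + ENNReal.ofReal (2 * Real.exp (-(r * n))) :=
            add_le_add le_rfl (ENNReal.ofReal_le_ofReal hBexp)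
        _ = ENNReal.ofReal (3 * Real.exp (-(r * n))) := by
            rw [← ENNReal.ofReal_add (by positivity) (by positivity)]
            ring_nf
    -- Step d
    by_cases hE0 : P {ω | ((∑ i, X n ω i) / n - S) * ((∑ i, Y n ω i) / n - (1 - 2 * p) * S) < 0} = 0
    · rw [hg]
      simp only [hE0, ENNReal.log_zero]
      rw [EReal.coe_mul_bot_of_pos (by exact_mod_cast inv_pos.2 hnpos)]
      exact bot_le
    · have hEt : P {ω | ((∑ i, X n ω i) / n - S) * ((∑ i, Y n ω i) / n - (1 - 2 * p) * S) < 0} ≠ ⊤ :=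
        measure_ne_top P _
      set tE := (P {ω | ((∑ i, X n ω i) / n - S) * ((∑ i, Y n ω i) / n - (1 - 2 * p) * S) < 0}).toReal
        with htE
      have htEpos : 0 < tE := ENNReal.toReal_pos hE0 hEt
      have htEle : tE ≤ 3 * Real.exp (-(r * n)) :=
        ENNReal.toReal_le_of_le_ofReal (by positivity) hstepC
      have hlogle : Real.log tE ≤ Real.log 3 - r * n := by
        calc Real.log tE ≤ Real.log (3 * Real.exp (-(r * n))) :=
              (Real.log_le_log_iff htEpos (by positivity)).2 htEle
          _ = Real.log 3 - r * n := by
              rw [Real.log_mul (by norm_num) (Real.exp_ne_zero _), Real.log_exp]; ring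
      have hfinal : (n:ℝ)⁻¹ * Real.log tE ≤ (n:ℝ)⁻¹ * Real.log 3 - r := by
        have h1 : (n:ℝ)⁻¹ * Real.log tE ≤ (n:ℝ)⁻¹ * (Real.log 3 - r * n) :=
          mul_le_mul_of_nonneg_left hlogle (inv_nonneg.2 hnpos.le)
        have h2 : (n:ℝ)⁻¹ * (Real.log 3 - r * n) = (n:ℝ)⁻¹ * Real.log 3 - r := by
          field_simp
        linarith
      rw [hg]
      simp only
      rw [ENNReal.log_pos_real hE0 hEt, ← htE,
        show (((n : ℝ)⁻¹ : ℝ) : EReal) * ((Real.log tE : ℝ) : EReal)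
          = (((n:ℝ)⁻¹ * Real.log tE : ℝ) : EReal) from (EReal.coe_mul _ _).symm]
      exact EReal.coe_le_coe_iff.2 hfinal
  -- Step e : limsup
  have hlim : Tendsto (fun n : ℕ => ((n:ℝ)⁻¹ * Real.log 3 - r)) atTop (nhds (-r)) := by
    have h1 := (tendsto_inv_atTop_nhds_zero_nat (𝕜 := ℝ)).mul_const (Real.log 3)
    have := h1.sub_const r
    simpa using this
  have hlimE : Tendsto (fun n : ℕ => (((n:ℝ)⁻¹ * Real.log 3 - r : ℝ) : EReal)) atTop
      (nhds ((-r : ℝ) : EReal)) := EReal.tendsto_coe.2 hlim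
  calc limsup g atTop ≤ limsup (fun n : ℕ => (((n:ℝ)⁻¹ * Real.log 3 - r : ℝ) : EReal)) atTop :=
        limsup_le_limsup key
    _ = ((-r : ℝ) : EReal) := hlimE.limsup_eq
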